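/- arXiv:math/0503600 — 4 statements merged into one kernel-verified Lean document; each statement's English description precedes it below -/
import Mathlib

section
/- Let ε > 0 and let F : ℝ^d → ℝ be continuously differentiable. Let Σ ⊂ ℝ^d be a bounded, open, connected set, and let h, w, φ be C² on an open neighborhood of the closure of Σ such that: L_ε h = 0 in Σ and h > 0 in Σ; L_ε w = h in Σ, w = 0 on ∂Σ and w > 0 in Σ; and, for some λ ∈ ℝ, L_ε φ = λ·φ in Σ, φ = 0 on ∂Σ and φ > 0 in Σ. If s := sup_{x∈Σ} w(x)/h(x) is finite, then λ·s ≥ 1 (equivalently, the principal Dirichlet eigenvalue λ of L_ε on Σ satisfies λ ≥ 1/sup_Σ(w/h)). -/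
open Metric Set

/-- The Euclidean Laplacian of `u` at `x`. -/
noncomputable def laplacian {d : ℕ} (u : EuclideanSpace ℝ (Fin d) → ℝ)
    (x : EuclideanSpace ℝ (Fin d)) : ℝ :=
  ∑ i : Fin d, iteratedFDeriv ℝ 2 u x ![EuclideanSpace.single i 1, EuclideanSpace.single i 1]

/-- The operator `L_ε u = -ε Δu + ⟨∇F, ∇u⟩`. -/
noncomputable def Lop {d : ℕ} (ε : ℝ) (F u : EuclideanSpace ℝ (Fin d) → ℝ)
    (x : EuclideanSpace ℝ (Fin d)) : ℝ :=
  -ε * laplacian u x + inner ℝ (gradient F x) (gradient u x)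


open MeasureTheory

lemma oneD_ftc (O : Set ℝ) (hO : IsOpen O) (hb : Bornology.IsBounded O)
    (f f' : ℝ → ℝ)
    (hd : ∀ t ∈ closure O, HasDerivAt f (f' t) t)
    (hc : ContinuousOn f' (closure O))
    (hz : ∀ t ∈ frontier O, f t = 0) :
    ∫ t in O, f' t = 0 := by
  classical
  rcases O.eq_empty_or_nonempty with rfl | hne
  · simp
  obtain ⟨m, M, hmM⟩ : ∃ m M : ℝ, O ⊆ Icc m M := by
    obtain ⟨R, hR⟩ := hb.subset_closedBall 0
    refine ⟨-R, R, ?_⟩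
    rwa [Real.closedBall_eq_Icc, zero_sub, zero_add] at hR
  -- left/right endpoints of components
  set A : ℝ → ℝ := fun x => sSup (Oᶜ ∩ Iio x) with hA
  set B : ℝ → ℝ := fun x => sInf (Oᶜ ∩ Ioi x) with hB
  have hAne : ∀ x ∈ O, (Oᶜ ∩ Iio x).Nonempty := by
    intro x hx
    refine ⟨m - 1, ?_, ?_⟩
    · intro hmem; have := (hmM hmem).1; linarith
    · have := (hmM hx).1; simp only [mem_Iio]; linarith
  have hBne : ∀ x ∈ O, (Oᶜ ∩ Ioi x).Nonempty := by
    intro x hx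
    refine ⟨M + 1, ?_, ?_⟩
    · intro hmem; have := (hmM hmem).2; linarith
    · have := (hmM hx).2; simp only [mem_Ioi]; linarith
  have hAbdd : ∀ x : ℝ, BddAbove (Oᶜ ∩ Iio x) := fun x =>
    ⟨x, fun t ht => le_of_lt ht.2⟩
  have hBbdd : ∀ x : ℝ, BddBelow (Oᶜ ∩ Ioi x) := fun x =>
    ⟨x, fun t ht => le_of_lt ht.2⟩
  have hAlt : ∀ x ∈ O, A x < x := by
    intro x hx
    obtain ⟨δ, hδ, hball⟩ := Metric.isOpen_iff.1 hO x hx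
    have : A x ≤ x - δ/2 := by
      apply csSup_le (hAne x hx)
      intro t ht
      by_contra hlt
      push_neg at hlt
      have : t ∈ O := hball (by
        rw [Metric.mem_ball, Real.dist_eq, abs_lt]
        have := ht.2.out; constructor <;> linarith)
      exact ht.1 this
    linarith
  have hBgt : ∀ x ∈ O, x < B x := by
    intro x hx
    obtain ⟨δ, hδ, hball⟩ := Metric.isOpen_iff.1 hO x hx
    have : x + δ/2 ≤ B x := by
      apply le_csInf (hBne x hx)
      intro t ht
      by_contra hlt
      push_neg at hlt
      have : t ∈ O := hball (by
        rw [Metric.mem_ball, Real.dist_eq, abs_lt]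
        have := ht.2.out; constructor <;> linarith)
      exact ht.1 this
    linarith
  have hAmem : ∀ x ∈ O, A x ∈ Oᶜ := by
    intro x hx
    have : A x ∈ closure (Oᶜ ∩ Iio x) := csSup_mem_closure (hAne x hx) (hAbdd x)
    have h2 : closure (Oᶜ ∩ Iio x) ⊆ Oᶜ := by
      refine (closure_mono inter_subset_left).trans ?_
      rw [hO.isClosed_compl.closure_eq]
    exact h2 this
  have hBmem : ∀ x ∈ O, B x ∈ Oᶜ := by
    intro x hx
    have : B x ∈ closure (Oᶜ ∩ Ioi x) := csInf_mem_closure (hBne x hx) (hBbdd x)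
    have h2 : closure (Oᶜ ∩ Ioi x) ⊆ Oᶜ := by
      refine (closure_mono inter_subset_left).trans ?_
      rw [hO.isClosed_compl.closure_eq]
    exact h2 this
  have hIoo : ∀ x ∈ O, Ioo (A x) (B x) ⊆ O := by
    intro x hx t ht
    by_contra htO
    rcases lt_trichotomy t x with h1 | h1 | h1
    · have : t ≤ A x := le_csSup (hAbdd x) ⟨htO, h1⟩
      exact absurd ht.1 (not_lt.2 this)
    · exact htO (h1 ▸ hx)
    · have : B x ≤ t := csInf_le (hBbdd x) ⟨htO, h1⟩
      exact absurd ht.2 (not_lt.2 this)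
  have hAfr : ∀ x ∈ O, A x ∈ frontier O := by
    intro x hx
    rw [frontier_eq_closure_inter_closure, hO.isClosed_compl.closure_eq]
    refine ⟨?_, hAmem x hx⟩
    have : A x ∈ closure (Ioo (A x) x) := by
      rw [closure_Ioo (ne_of_lt (hAlt x hx))]
      exact ⟨le_refl _, le_of_lt (hAlt x hx)⟩
    exact closure_mono (fun t ht => hIoo x hx ⟨ht.1, lt_trans ht.2 (hBgt x hx)⟩) this
  have hBfr : ∀ x ∈ O, B x ∈ frontier O := by
    intro x hx
    rw [frontier_eq_closure_inter_closure, hO.isClosed_compl.closure_eq]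
    refine ⟨?_, hBmem x hx⟩
    have : B x ∈ closure (Ioo x (B x)) := by
      rw [closure_Ioo (ne_of_lt (hBgt x hx))]
      exact ⟨le_of_lt (hBgt x hx), le_refl _⟩
    exact closure_mono (fun t ht => hIoo x hx ⟨lt_trans (hAlt x hx) ht.1, ht.2⟩) this
  -- coherence
  have hcoh : ∀ x ∈ O, ∀ y ∈ Ioo (A x) (B x), A y = A x ∧ B y = B x := by
    intro x hx y hy
    have hyO : y ∈ O := hIoo x hx hy
    constructor
    · apply le_antisymm
      · apply csSup_le (hAne y hyO)
        intro t ht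
        by_contra hlt
        push_neg at hlt
        exact ht.1 (hIoo x hx ⟨hlt, lt_trans ht.2 hy.2⟩)
      · exact le_csSup (hAbdd y) ⟨hAmem x hx, hy.1⟩
    · apply le_antisymm
      · exact csInf_le (hBbdd y) ⟨hBmem x hx, hy.2⟩
      · apply le_csInf (hBne y hyO)
        intro t ht
        by_contra hlt
        push_neg at hlt
        exact ht.1 (hIoo x hx ⟨lt_trans hy.1 ht.2, hlt⟩)
  -- the set of component endpoints
  set T : Set (ℝ × ℝ) := (fun x => (A x, B x)) '' O with hT
  have hTlt : ∀ p ∈ T, p.1 < p.2 := by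
    rintro p ⟨x, hx, rfl⟩
    exact lt_trans (hAlt x hx) (hBgt x hx)
  have hTsub : ∀ p ∈ T, Ioo p.1 p.2 ⊆ O := by
    rintro p ⟨x, hx, rfl⟩
    exact hIoo x hx
  have hTeq : ∀ p ∈ T, ∀ q ∈ T, (Ioo p.1 p.2 ∩ Ioo q.1 q.2).Nonempty → p = q := by
    rintro p ⟨x, hx, rfl⟩ q ⟨z, hz, rfl⟩ ⟨y, hy1, hy2⟩
    have e1 := hcoh x hx y hy1
    have e2 := hcoh z hz y hy2
    simp only at hy1 hy2 ⊢
    rw [Prod.ext_iff]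
    exact ⟨by simp only; rw [← e1.1, e2.1], by simp only; rw [← e1.2, e2.2]⟩
  -- countability
  have hTc : T.Countable := by
    have hex : ∀ p ∈ T, ∃ q : ℚ, (q : ℝ) ∈ Ioo p.1 p.2 := by
      intro p hp
      obtain ⟨q, h1, h2⟩ := exists_rat_btwn (hTlt p hp)
      exact ⟨q, h1, h2⟩
    choose r hr using hex
    set f : ℝ × ℝ → ℕ := fun p => if h : p ∈ T then Encodable.encode (r p h) else 0 with hf
    apply Set.countable_iff_exists_injOn.2
    refine ⟨f, ?_⟩
    intro p hp q hq hpq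
    simp only [hf, dif_pos hp, dif_pos hq] at hpq
    have hrr : r p hp = r q hq := Encodable.encode_injective hpq
    have : ((r p hp : ℚ) : ℝ) ∈ Ioo p.1 p.2 ∩ Ioo q.1 q.2 := ⟨hr p hp, by rw [hrr]; exact hr q hq⟩
    exact hTeq p hp q hq ⟨_, this⟩
  -- O is the union
  have hOun : O = ⋃ (p : T), Ioo (p : ℝ × ℝ).1 (p : ℝ × ℝ).2 := by
    ext t
    constructor
    · intro ht
      exact Set.mem_iUnion.2 ⟨⟨(A t, B t), ⟨t, ht, rfl⟩⟩, ⟨hAlt t ht, hBgt t ht⟩⟩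
    · intro ht
      obtain ⟨⟨p, hp⟩, hmem⟩ := Set.mem_iUnion.1 ht
      exact hTsub p hp hmem
  have : Countable T := hTc.to_subtype
  have hdisj : Pairwise (Function.onFun Disjoint (fun p : T => Ioo (p : ℝ × ℝ).1 (p : ℝ × ℝ).2)) := by
    rintro ⟨p, hp⟩ ⟨q, hq⟩ hne'
    simp only [Function.onFun]
    rw [Set.disjoint_iff_inter_eq_empty]
    by_contra hcontra
    exact hne' (Subtype.ext (hTeq p hp q hq (Set.nonempty_iff_ne_empty.2 hcontra)))
  -- integrability
  have hint : IntegrableOn f' O := by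
    have hcomp : IsCompact (closure O) := hb.isCompact_closure
    exact (hc.integrableOn_compact hcomp).mono_set subset_closure
  rw [hOun, integral_iUnion (fun p => measurableSet_Ioo) hdisj (hOun ▸ hint)]
  have hzero : ∀ p : T, ∫ t in Ioo (p : ℝ × ℝ).1 (p : ℝ × ℝ).2, f' t = 0 := by
    rintro ⟨p, hp⟩
    have hlt := hTlt p hp
    have hIccsub : Icc p.1 p.2 ⊆ closure O := by
      rw [← closure_Ioo (ne_of_lt hlt)]
      exact closure_mono (hTsub p hp)
    have hftc : ∫ t in p.1..p.2, f' t = f p.2 - f p.1 := by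
      apply intervalIntegral.integral_eq_sub_of_hasDerivAt
      · intro t ht
        rw [Set.uIcc_of_le (le_of_lt hlt)] at ht
        exact hd t (hIccsub ht)
      · apply ContinuousOn.intervalIntegrable
        rw [Set.uIcc_of_le (le_of_lt hlt)]
        exact hc.mono hIccsub
    have hf1 : f p.1 = 0 := by
      obtain ⟨x, hx, hpx⟩ := hp
      have := hAfr x hx
      rw [← hpx]
      exact hz _ this
    have hf2 : f p.2 = 0 := by
      obtain ⟨x, hx, hpx⟩ := hp
      have := hBfr x hx
      rw [← hpx]
      exact hz _ this
    rw [intervalIntegral.integral_of_le (le_of_lt hlt)] at hftc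
    rw [← MeasureTheory.integral_Ioc_eq_integral_Ioo, hftc, hf1, hf2, sub_zero]
  simp only [hzero, tsum_zero]

lemma slice_pi {n : ℕ} (i : Fin (n+1)) (S U : Set (Fin (n+1) → ℝ))
    (hSbd : Bornology.IsBounded S) (hSo : IsOpen S) (hUo : IsOpen U) (hSU : closure S ⊆ U)
    (g : (Fin (n+1) → ℝ) → ℝ) (hg : ContDiffOn ℝ 1 g U)
    (hz : ∀ x ∈ frontier S, g x = 0) :
    ∫ x in S, fderiv ℝ g x (Pi.single i 1) = 0 := by
  classical
  set v : Fin (n+1) → ℝ := Pi.single i 1 with hv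
  set g' : (Fin (n+1) → ℝ) → ℝ := fun x => fderiv ℝ g x v with hg'
  have hg'c : ContinuousOn g' U := by
    have h1 : ContinuousOn (fderiv ℝ g) U := hg.continuousOn_fderiv_of_isOpen hUo le_rfl
    exact h1.clm_apply continuousOn_const
  have hScl : IsCompact (closure S) := hSbd.isCompact_closure
  have hvol : volume S ≠ ⊤ :=
    ne_of_lt (lt_of_le_of_lt (measure_mono subset_closure) hScl.measure_lt_top)
  have hint : IntegrableOn g' S :=
    ((hg'c.mono hSU).integrableOn_compact hScl).mono_set subset_closure
  set e := MeasurableEquiv.piFinSuccAbove (fun _ : Fin (n+1) => ℝ) i with he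
  have mp : MeasurePreserving e volume volume := volume_preserving_piFinSuccAbove _ i
  have hHint : Integrable (fun y : ℝ × (Fin n → ℝ) => S.indicator g' (e.symm y)) volume := by
    rw [← mp.integrable_comp_emb e.measurableEmbedding]
    have : (fun y : ℝ × (Fin n → ℝ) => S.indicator g' (e.symm y)) ∘ e = S.indicator g' := by
      funext x; simp
    rw [this, integrable_indicator_iff hSo.measurableSet]
    exact hint
  have step1 : ∫ x in S, g' x = ∫ y : ℝ × (Fin n → ℝ), S.indicator g' (e.symm y) := by
    rw [← integral_indicator hSo.measurableSet,
      ← mp.integral_comp' (fun y => S.indicator g' (e.symm y))]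
    simp
  have step2 : ∫ y : ℝ × (Fin n → ℝ), S.indicator g' (e.symm y)
      = ∫ y2 : Fin n → ℝ, ∫ t : ℝ, S.indicator g' (e.symm (t, y2)) := by
    rw [Measure.volume_eq_prod] at hHint ⊢
    exact integral_prod_symm _ hHint
  have step3 : ∀ y2 : Fin n → ℝ, ∫ t : ℝ, S.indicator g' (e.symm (t, y2)) = 0 := by
    intro y2
    set X : ℝ → (Fin (n+1) → ℝ) := fun t => i.insertNth t y2 with hX
    have hXe : ∀ t, e.symm (t, y2) = X t := by
      intro t
      simp [he, hX, MeasurableEquiv.piFinSuccAbove, Fin.insertNthEquiv]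
    have hXc : Continuous X := Continuous.finInsertNth i (continuous_id : Continuous fun t : ℝ => t) continuous_const
    set O : Set ℝ := X ⁻¹' S with hO
    have hOopen : IsOpen O := hSo.preimage hXc
    have hObd : Bornology.IsBounded O := by
      obtain ⟨R, hR⟩ := hSbd.subset_closedBall 0
      have : O ⊆ Icc (-R) R := by
        intro t ht
        have h1 : ‖X t‖ ≤ R := by
          have := hR ht; rwa [Metric.mem_closedBall, dist_zero_right] at this
        have h2 : |t| ≤ ‖X t‖ := by
          have := norm_le_pi_norm (X t) i
          simpa [hX, Real.norm_eq_abs] using this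
        rw [mem_Icc, ← abs_le]
        linarith
      exact (Metric.isBounded_Icc (-R) R).subset this
    have hXcl : ∀ t ∈ closure O, X t ∈ closure S := fun t ht =>
      hXc.closure_preimage_subset S ht
    have hline : ∀ t : ℝ, HasDerivAt X (Pi.single i 1) t := by
      intro t
      have hXaff : X = fun s => X 0 + s • (Pi.single i 1 : Fin (n+1) → ℝ) := by
        funext s
        funext j
        rcases eq_or_ne j i with rfl | hj
        · simp [hX, Fin.insertNth_apply_same]
        · obtain ⟨k, rfl⟩ := Fin.exists_succAbove_eq hj
          simp [hX, Fin.insertNth_apply_succAbove, Pi.single_eq_of_ne (Fin.succAbove_ne i k)]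
      rw [hXaff]
      simpa using ((hasDerivAt_id t).smul_const (Pi.single i 1 : Fin (n+1) → ℝ)).const_add (X 0)
    have hinner : ∫ t in O, g' (X t) = 0 := by
      apply oneD_ftc O hOopen hObd (fun t => g (X t)) (fun t => g' (X t))
      · intro t ht
        have hmem : X t ∈ U := hSU (hXcl t ht)
        have hdiff : DifferentiableAt ℝ g (X t) :=
          (hg.differentiableOn one_ne_zero).differentiableAt (hUo.mem_nhds hmem)
        have := hdiff.hasFDerivAt.comp_hasDerivAt t (hline t)
        simpa [hg', hv, Function.comp_def] using this
      · exact hg'c.comp hXc.continuousOn (fun t ht => hSU (hXcl t ht))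
      · intro t ht
        have h1 : X t ∈ closure S := hXcl t ht.1
        have h2 : X t ∉ S := by
          intro hmem
          exact ((hOopen.frontier_eq ▸ ht).2 : t ∉ O) hmem
        exact hz _ ⟨h1, fun hmem => h2 (interior_subset (hSo.interior_eq ▸ hmem))⟩
    calc ∫ t : ℝ, S.indicator g' (e.symm (t, y2))
        = ∫ t : ℝ, O.indicator (fun t => g' (X t)) t := by
          refine integral_congr_ae (Filter.Eventually.of_forall fun t => ?_)
          show S.indicator g' (e.symm (t, y2)) = O.indicator (fun t => g' (X t)) t
          rw [hXe t]
          by_cases hmem : t ∈ O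
          · rw [indicator_of_mem hmem, indicator_of_mem (by exact hmem)]
          · rw [indicator_of_notMem hmem, indicator_of_notMem (by exact hmem)]
      _ = ∫ t in O, g' (X t) := integral_indicator hOopen.measurableSet
      _ = 0 := hinner
  rw [step1, step2]
  simp only [step3, integral_zero]

lemma slice_euclidean {d : ℕ} (i : Fin d) (S U : Set (EuclideanSpace ℝ (Fin d)))
    (hSbd : Bornology.IsBounded S) (hSo : IsOpen S) (hUo : IsOpen U) (hSU : closure S ⊆ U)
    (g : EuclideanSpace ℝ (Fin d) → ℝ) (hg : ContDiffOn ℝ 1 g U)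
    (hz : ∀ x ∈ frontier S, g x = 0) :
    ∫ x in S, fderiv ℝ g x (EuclideanSpace.single i 1) = 0 := by
  classical
  cases d with
  | zero => exact i.elim0
  | succ n =>
  set L := PiLp.continuousLinearEquiv 2 ℝ (fun _ : Fin (n+1) => ℝ) with hL
  set em := (MeasurableEquiv.toLp 2 (Fin (n+1) → ℝ)).symm with hem
  have hcoe : ⇑em = ⇑L := rfl
  have hcoeH : ⇑L.toHomeomorph = ⇑L := rfl
  set S' : Set (Fin (n+1) → ℝ) := ⇑L '' S with hS'
  set U' : Set (Fin (n+1) → ℝ) := ⇑L '' U with hU'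
  set g₂ : (Fin (n+1) → ℝ) → ℝ := g ∘ ⇑L.symm with hg₂
  have hS'bd : Bornology.IsBounded S' := ((L : EuclideanSpace ℝ (Fin (n+1)) →L[ℝ]
    (Fin (n+1) → ℝ)).lipschitz).isBounded_image hSbd
  have hS'o : IsOpen S' := L.toHomeomorph.isOpenMap _ hSo
  have hU'o : IsOpen U' := L.toHomeomorph.isOpenMap _ hUo
  have hclS' : closure S' = ⇑L '' closure S := (L.toHomeomorph.image_closure S).symm
  have hS'U' : closure S' ⊆ U' := by
    rw [hclS']
    exact image_mono hSU
  have hg₂ : ContDiffOn ℝ 1 g₂ U' := by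
    apply hg.comp (L.symm.contDiff.contDiffOn)
    rintro y ⟨x, hx, rfl⟩
    simpa using hx
  have hz₂ : ∀ y ∈ frontier S', g₂ y = 0 := by
    intro y hy
    have himg : frontier S' = ⇑L '' frontier S := by
      rw [hS', ← hcoeH, ← Homeomorph.image_frontier]
    rw [himg] at hy
    obtain ⟨x, hx, rfl⟩ := hy
    show g (L.symm (L x)) = 0
    rw [L.symm_apply_apply]
    exact hz x hx
  have h0 : ∫ y in S', fderiv ℝ g₂ y (Pi.single i 1) = 0 :=
    slice_pi i S' U' hS'bd hS'o hU'o hS'U' g₂ hg₂ hz₂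
  have htrans : ∫ y in S', fderiv ℝ g₂ y (Pi.single i 1)
      = ∫ x in S, fderiv ℝ g₂ (em x) (Pi.single i 1) := by
    rw [hS', ← hcoe]
    exact (EuclideanSpace.volume_preserving_symm_measurableEquiv_toLp
      (Fin (n+1))).setIntegral_image_emb em.measurableEmbedding _ S
  have hptwise : ∀ x ∈ S, fderiv ℝ g₂ (em x) (Pi.single i 1)
      = fderiv ℝ g x (EuclideanSpace.single i 1) := by
    intro x hx
    have hxU : x ∈ U := hSU (subset_closure hx)
    have hdiff : DifferentiableAt ℝ g x :=
      (hg.differentiableOn one_ne_zero).differentiableAt (hUo.mem_nhds hxU)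
    have hcomp : HasFDerivAt g₂ ((fderiv ℝ g x).comp
        (L.symm : (Fin (n+1) → ℝ) →L[ℝ] EuclideanSpace ℝ (Fin (n+1)))) (L x) := by
      have h1 : HasFDerivAt (⇑L.symm)
          (L.symm : (Fin (n+1) → ℝ) →L[ℝ] EuclideanSpace ℝ (Fin (n+1))) (L x) :=
        L.symm.hasFDerivAt
      have h2 : HasFDerivAt g (fderiv ℝ g x) (L.symm (L x)) := by
        rw [L.symm_apply_apply]; exact hdiff.hasFDerivAt
      exact h2.comp (L x) h1
    have : em x = L x := by rw [hcoe]
    rw [this, hcomp.fderiv]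
    show fderiv ℝ g x (L.symm (Pi.single i 1)) = fderiv ℝ g x (EuclideanSpace.single i 1)
    congr 1
  rw [htrans] at h0
  rw [← h0]
  exact setIntegral_congr_fun hSo.measurableSet (fun x hx => (hptwise x hx).symm)

section helpers

variable {d : ℕ}

lemma laplacian_eq (u : EuclideanSpace ℝ (Fin d) → ℝ) (x : EuclideanSpace ℝ (Fin d)) :
    laplacian u x = ∑ i : Fin d,
      fderiv ℝ (fderiv ℝ u) x (EuclideanSpace.single i 1) (EuclideanSpace.single i 1) := by
  unfold laplacian
  refine Finset.sum_congr rfl fun i _ => ?_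
  rw [iteratedFDeriv_two_apply]
  simp

lemma inner_grad_eq (f u : EuclideanSpace ℝ (Fin d) → ℝ) (x : EuclideanSpace ℝ (Fin d)) :
    (inner ℝ (gradient f x) (gradient u x) : ℝ) = ∑ i : Fin d,
      fderiv ℝ f x (EuclideanSpace.single i 1) * fderiv ℝ u x (EuclideanSpace.single i 1) := by
  have hcomp : ∀ (g : EuclideanSpace ℝ (Fin d) → ℝ) (i : Fin d),
      gradient g x i = fderiv ℝ g x (EuclideanSpace.single i 1) := by
    intro g i
    have h1 : (inner ℝ (gradient g x) (EuclideanSpace.single i 1) : ℝ)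
        = fderiv ℝ g x (EuclideanSpace.single i 1) := by
      rw [gradient, InnerProductSpace.toDual_symm_apply]
    rw [← h1, real_inner_comm]
    rw [EuclideanSpace.inner_single_left]
    simp
  rw [PiLp.inner_apply]
  refine Finset.sum_congr rfl fun i _ => ?_
  simp only [RCLike.inner_apply, starRingEnd_apply, star_trivial]
  rw [hcomp f i, hcomp u i, mul_comm]

end helpers

lemma div_identity {d : ℕ} (ε : ℝ) (hε : 0 < ε)
    (F : EuclideanSpace ℝ (Fin d) → ℝ) (hF : ContDiff ℝ 1 F)
    (S U : Set (EuclideanSpace ℝ (Fin d))) (hSopen : IsOpen S) (hUopen : IsOpen U)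
    (hSU : closure S ⊆ U)
    (w φ : EuclideanSpace ℝ (Fin d) → ℝ)
    (hw2 : ContDiffOn ℝ 2 w U) (hφ2 : ContDiffOn ℝ 2 φ U)
    (x : EuclideanSpace ℝ (Fin d)) (hx : x ∈ S) :
    ∑ i : Fin d, fderiv ℝ (fun y => Real.exp (-(ε⁻¹) * F y) *
        (φ y * fderiv ℝ w y (EuclideanSpace.single i 1)
         - w y * fderiv ℝ φ y (EuclideanSpace.single i 1))) x (EuclideanSpace.single i 1)
    = Real.exp (-(ε⁻¹) * F x) * ε⁻¹ *
        (-(φ x * Lop ε F w x) + w x * Lop ε F φ x) := by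
  have hxU : x ∈ U := hSU (subset_closure hx)
  set v : Fin d → EuclideanSpace ℝ (Fin d) := fun i => EuclideanSpace.single i 1 with hv
  set ρ : EuclideanSpace ℝ (Fin d) → ℝ := fun y => Real.exp (-(ε⁻¹) * F y) with hρ
  have hFd : DifferentiableAt ℝ F x := hF.differentiable one_ne_zero x
  have hρd : HasFDerivAt ρ (ρ x • (-(ε⁻¹) • fderiv ℝ F x)) x := by
    have h1 : HasFDerivAt (fun y => -(ε⁻¹) * F y) (-(ε⁻¹) • fderiv ℝ F x) x :=
      hFd.hasFDerivAt.const_mul _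
    have h2 := (Real.hasDerivAt_exp (-(ε⁻¹) * F x)).comp_hasFDerivAt x h1
    simpa [hρ, smul_smul, mul_comm, Function.comp_def] using h2
  have hwd : DifferentiableAt ℝ w x :=
    (hw2.differentiableOn (by norm_num)).differentiableAt (hUopen.mem_nhds hxU)
  have hφd : DifferentiableAt ℝ φ x :=
    (hφ2.differentiableOn (by norm_num)).differentiableAt (hUopen.mem_nhds hxU)
  have hW1 : ContDiffOn ℝ 1 (fderiv ℝ w) U := hw2.fderiv_of_isOpen hUopen (by norm_num)
  have hΦ1 : ContDiffOn ℝ 1 (fderiv ℝ φ) U := hφ2.fderiv_of_isOpen hUopen (by norm_num)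
  have hWd : DifferentiableAt ℝ (fderiv ℝ w) x :=
    (hW1.differentiableOn one_ne_zero).differentiableAt (hUopen.mem_nhds hxU)
  have hΦd : DifferentiableAt ℝ (fderiv ℝ φ) x :=
    (hΦ1.differentiableOn one_ne_zero).differentiableAt (hUopen.mem_nhds hxU)
  have key : ∀ i : Fin d,
      fderiv ℝ (fun y => ρ y * (φ y * fderiv ℝ w y (v i) - w y * fderiv ℝ φ y (v i))) x (v i)
      = (-(ρ x * ε⁻¹ * φ x)) * (fderiv ℝ F x (v i) * fderiv ℝ w x (v i))
        + (ρ x * ε⁻¹ * w x) * (fderiv ℝ F x (v i) * fderiv ℝ φ x (v i))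
        + (ρ x * φ x) * (fderiv ℝ (fderiv ℝ w) x (v i) (v i))
        + (-(ρ x * w x)) * (fderiv ℝ (fderiv ℝ φ) x (v i) (v i)) := by
    intro i
    have hDw : HasFDerivAt (fun y => fderiv ℝ w y (v i))
        ((ContinuousLinearMap.apply ℝ ℝ (v i)).comp (fderiv ℝ (fderiv ℝ w) x)) x :=
      ((ContinuousLinearMap.apply ℝ ℝ (v i)).hasFDerivAt).comp x hWd.hasFDerivAt
    have hDφ : HasFDerivAt (fun y => fderiv ℝ φ y (v i))
        ((ContinuousLinearMap.apply ℝ ℝ (v i)).comp (fderiv ℝ (fderiv ℝ φ) x)) x :=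
      ((ContinuousLinearMap.apply ℝ ℝ (v i)).hasFDerivAt).comp x hΦd.hasFDerivAt
    have hBig := hρd.mul (((hφd.hasFDerivAt.mul hDw).sub (hwd.hasFDerivAt.mul hDφ)))
    rw [(show HasFDerivAt (fun y => ρ y * (φ y * fderiv ℝ w y (v i) - w y * fderiv ℝ φ y (v i))) _ x from hBig).fderiv]
    simp only [Pi.mul_apply, Pi.sub_apply, ContinuousLinearMap.add_apply, ContinuousLinearMap.smul_apply,
      ContinuousLinearMap.sub_apply, ContinuousLinearMap.comp_apply,
      ContinuousLinearMap.apply_apply, smul_eq_mul]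
    ring
  calc ∑ i : Fin d,
      fderiv ℝ (fun y => ρ y * (φ y * fderiv ℝ w y (v i) - w y * fderiv ℝ φ y (v i))) x (v i)
      = ∑ i : Fin d,
        ((-(ρ x * ε⁻¹ * φ x)) * (fderiv ℝ F x (v i) * fderiv ℝ w x (v i))
        + (ρ x * ε⁻¹ * w x) * (fderiv ℝ F x (v i) * fderiv ℝ φ x (v i))
        + (ρ x * φ x) * (fderiv ℝ (fderiv ℝ w) x (v i) (v i))
        + (-(ρ x * w x)) * (fderiv ℝ (fderiv ℝ φ) x (v i) (v i))) :=
        Finset.sum_congr rfl fun i _ => key i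
    _ = (-(ρ x * ε⁻¹ * φ x)) * (∑ i : Fin d, fderiv ℝ F x (v i) * fderiv ℝ w x (v i))
        + (ρ x * ε⁻¹ * w x) * (∑ i : Fin d, fderiv ℝ F x (v i) * fderiv ℝ φ x (v i))
        + (ρ x * φ x) * (∑ i : Fin d, fderiv ℝ (fderiv ℝ w) x (v i) (v i))
        + (-(ρ x * w x)) * (∑ i : Fin d, fderiv ℝ (fderiv ℝ φ) x (v i) (v i)) := by
        rw [Finset.sum_add_distrib, Finset.sum_add_distrib, Finset.sum_add_distrib,
          ← Finset.mul_sum, ← Finset.mul_sum, ← Finset.mul_sum, ← Finset.mul_sum]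
    _ = ρ x * ε⁻¹ * (-(φ x * Lop ε F w x) + w x * Lop ε F φ x) := by
        rw [hv]
        simp only
        rw [← inner_grad_eq F w x, ← inner_grad_eq F φ x, ← laplacian_eq w x, ← laplacian_eq φ x]
        unfold Lop
        field_simp
        ring

/-- uncertainty principle `λ ≥ 1 / sup_Σ (w/h)` (Lemma 2.1). -/
theorem stmt_0 {d : ℕ} (ε : ℝ) (hε : 0 < ε)
    (F : EuclideanSpace ℝ (Fin d) → ℝ) (hF : ContDiff ℝ 1 F)
    (S : Set (EuclideanSpace ℝ (Fin d)))
    (hSbd : Bornology.IsBounded S) (hSopen : IsOpen S) (hSconn : IsConnected S)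
    (h w φ : EuclideanSpace ℝ (Fin d) → ℝ)
    (U : Set (EuclideanSpace ℝ (Fin d))) (hUopen : IsOpen U) (hSU : closure S ⊆ U)
    (hh2 : ContDiffOn ℝ 2 h U) (hw2 : ContDiffOn ℝ 2 w U) (hφ2 : ContDiffOn ℝ 2 φ U)
    (hhharm : ∀ x ∈ S, Lop ε F h x = 0) (hhpos : ∀ x ∈ S, 0 < h x)
    (hweq : ∀ x ∈ S, Lop ε F w x = h x) (hwbd : ∀ x ∈ frontier S, w x = 0)
    (hwpos : ∀ x ∈ S, 0 < w x)
    (lam : ℝ)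
    (hφeq : ∀ x ∈ S, Lop ε F φ x = lam * φ x) (hφbd : ∀ x ∈ frontier S, φ x = 0)
    (hφpos : ∀ x ∈ S, 0 < φ x)
    (hfin : BddAbove ((fun x => w x / h x) '' S)) :
    1 ≤ lam * sSup ((fun x => w x / h x) '' S) := by
  classical
  set s : ℝ := sSup ((fun x => w x / h x) '' S) with hs
  set ρ : EuclideanSpace ℝ (Fin d) → ℝ := fun y => Real.exp (-(ε⁻¹) * F y) with hρ
  set v : Fin d → EuclideanSpace ℝ (Fin d) := fun i => EuclideanSpace.single i 1 with hv
  -- basic facts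
  have hScl : IsCompact (closure S) := hSbd.isCompact_closure
  have hρc : Continuous ρ := Real.continuous_exp.comp (continuous_const.mul hF.continuous)
  have hρ1 : ContDiff ℝ 1 ρ := (Real.contDiff_exp (n := 1)).comp (contDiff_const.mul hF)
  have hρpos : ∀ y, 0 < ρ y := fun y => Real.exp_pos _
  -- integrability helper
  have hIntOn : ∀ f : EuclideanSpace ℝ (Fin d) → ℝ, ContinuousOn f U → IntegrableOn f S := by
    intro f hf
    exact ((hf.mono hSU).integrableOn_compact hScl).mono_set subset_closure
  -- the vector field components
  set G : Fin d → EuclideanSpace ℝ (Fin d) → ℝ := fun i y =>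
    ρ y * (φ y * fderiv ℝ w y (v i) - w y * fderiv ℝ φ y (v i)) with hG
  have hW1 : ContDiffOn ℝ 1 (fderiv ℝ w) U := hw2.fderiv_of_isOpen hUopen (by norm_num)
  have hΦ1 : ContDiffOn ℝ 1 (fderiv ℝ φ) U := hφ2.fderiv_of_isOpen hUopen (by norm_num)
  have hG1 : ∀ i, ContDiffOn ℝ 1 (G i) U := by
    intro i
    apply (hρ1.contDiffOn).mul
    exact (((hφ2.of_le (by norm_num)).mul (hW1.clm_apply contDiffOn_const)).sub
      ((hw2.of_le (by norm_num)).mul (hΦ1.clm_apply contDiffOn_const)))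
  have hGz : ∀ i, ∀ x ∈ frontier S, G i x = 0 := by
    intro i x hx
    simp [hG, hwbd x hx, hφbd x hx]
  -- divergence of G vanishes after integration
  have hdivint : ∫ x in S, (∑ i : Fin d, fderiv ℝ (G i) x (v i)) = 0 := by
    have hterm : ∀ i : Fin d, IntegrableOn (fun x => fderiv ℝ (G i) x (v i)) S := by
      intro i
      apply hIntOn
      exact ((hG1 i).continuousOn_fderiv_of_isOpen hUopen le_rfl).clm_apply continuousOn_const
    rw [integral_finset_sum Finset.univ (fun i _ => hterm i)]
    refine Finset.sum_eq_zero fun i _ => ?_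
    exact slice_euclidean i S U hSbd hSopen hUopen hSU (G i) (hG1 i) (hGz i)
  -- rewrite the divergence via the identity and the equations
  have hintegrand : ∀ x ∈ S, (∑ i : Fin d, fderiv ℝ (G i) x (v i))
      = ε⁻¹ * (lam * (ρ x * (w x * φ x)) - ρ x * (φ x * h x)) := by
    intro x hx
    have hid := div_identity ε hε F hF S U hSopen hUopen hSU w φ hw2 hφ2 x hx
    have : ∑ i : Fin d, fderiv ℝ (G i) x (v i)
        = Real.exp (-(ε⁻¹) * F x) * ε⁻¹ * (-(φ x * Lop ε F w x) + w x * Lop ε F φ x) := hid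
    rw [this, hweq x hx, hφeq x hx]
    show ρ x * ε⁻¹ * (-(φ x * h x) + w x * (lam * φ x)) = _
    ring
  have hImain : ∫ x in S, (∑ i : Fin d, fderiv ℝ (G i) x (v i))
      = ε⁻¹ * (lam * (∫ x in S, ρ x * (w x * φ x)) - ∫ x in S, ρ x * (φ x * h x)) := by
    have hint1 : IntegrableOn (fun x => ρ x * (φ x * h x)) S :=
      hIntOn _ (hρc.continuousOn.mul ((hφ2.continuousOn).mul (hh2.continuousOn)))
    have hint2 : IntegrableOn (fun x => ρ x * (w x * φ x)) S :=
      hIntOn _ (hρc.continuousOn.mul ((hw2.continuousOn).mul (hφ2.continuousOn)))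
    rw [setIntegral_congr_fun hSopen.measurableSet hintegrand]
    rw [integral_const_mul]
    congr 1
    rw [integral_sub (hint2.const_mul lam) hint1, integral_const_mul]
  set I1 : ℝ := ∫ x in S, ρ x * (φ x * h x) with hI1
  set I2 : ℝ := ∫ x in S, ρ x * (w x * φ x) with hI2
  have hbal : I1 = lam * I2 := by
    have := hdivint
    rw [hImain] at this
    have hεne : ε⁻¹ ≠ 0 := inv_ne_zero (ne_of_gt hε)
    have h2 : lam * I2 - I1 = 0 := by
      rcases mul_eq_zero.1 this with hc | hc
      · exact absurd hc hεne
      · exact hc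
    linarith
  -- positivity
  have hSne : S.Nonempty := hSconn.nonempty
  have hposint : ∀ f : EuclideanSpace ℝ (Fin d) → ℝ, ContinuousOn f U →
      (∀ x ∈ S, 0 < f x) → 0 < ∫ x in S, f x := by
    intro f hf hfpos
    rw [setIntegral_pos_iff_support_of_nonneg_ae _ (hIntOn f hf)]
    · have hsub : S ⊆ Function.support f ∩ S :=
        fun x hx => ⟨ne_of_gt (hfpos x hx), hx⟩
      calc (0 : ENNReal) < volume S := hSopen.measure_pos volume hSne
        _ ≤ volume (Function.support f ∩ S) := measure_mono hsub
    · rw [Filter.EventuallyLE, ae_restrict_iff' hSopen.measurableSet]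
      exact ae_of_all _ fun x hx => le_of_lt (hfpos x hx)
  have hI1pos : 0 < I1 := hposint _
    (hρc.continuousOn.mul ((hφ2.continuousOn).mul (hh2.continuousOn)))
    (fun x hx => mul_pos (hρpos x) (mul_pos (hφpos x hx) (hhpos x hx)))
  have hI2pos : 0 < I2 := hposint _
    (hρc.continuousOn.mul ((hw2.continuousOn).mul (hφ2.continuousOn)))
    (fun x hx => mul_pos (hρpos x) (mul_pos (hwpos x hx) (hφpos x hx)))
  -- comparison
  have hwsh : ∀ x ∈ S, w x ≤ s * h x := by
    intro x hx
    have h1 : w x / h x ≤ s := le_csSup hfin ⟨x, hx, rfl⟩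
    rwa [div_le_iff₀ (hhpos x hx)] at h1
  have hI2le : I2 ≤ s * I1 := by
    have hint1 : IntegrableOn (fun x => ρ x * (w x * φ x)) S :=
      hIntOn _ (hρc.continuousOn.mul ((hw2.continuousOn).mul (hφ2.continuousOn)))
    have hint2 : IntegrableOn (fun x => s * (ρ x * (φ x * h x))) S :=
      (hIntOn _ (hρc.continuousOn.mul ((hφ2.continuousOn).mul (hh2.continuousOn)))).const_mul s
    have hmono : ∀ x ∈ S, ρ x * (w x * φ x) ≤ s * (ρ x * (φ x * h x)) := by
      intro x hx
      have := hwsh x hx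
      have h1 : 0 < ρ x * φ x := mul_pos (hρpos x) (hφpos x hx)
      nlinarith
    calc I2 ≤ ∫ x in S, s * (ρ x * (φ x * h x)) :=
          setIntegral_mono_on hint1 hint2 hSopen.measurableSet hmono
      _ = s * I1 := integral_const_mul _ _
  -- conclude
  have hlampos : 0 < lam := by
    by_contra hlam
    push_neg at hlam
    nlinarith
  nlinarith [mul_le_mul_of_nonneg_left hI2le (le_of_lt hlampos)]
end

section
/- Let F : ℝ^d → ℝ be C¹, let ε > 0, x ∈ ℝ^d and R > 0, and suppose 2R·sup_{B(x,R)} |∇F| ≤ d·ε. Let φ be C² on an open neighborhood of the closed ball B̄(x, R) with φ > 0 in B(x, R), φ = 0 on ∂B(x, R), and −ε·Δφ + ⟨∇F, ∇φ⟩ = λ·φ in B(x, R) for some λ ∈ ℝ. Then λ ≥ d·ε/R². In particular, if R = δ·ε with δ ∈ (1/8, 1), the principal Dirichlet eigenvalue of L_ε on B(x, R) is at least d/(δ²ε) ≥ 1/(C·ε) for a constant C depending only on d. -/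
open Metric Set Filter Topology InnerProductSpace

local notation "⟪" x ", " y "⟫" => @inner ℝ _ _ x y

/-- 1D second derivative test at a local max. -/
lemma deriv2_nonpos_of_isLocalMax {h p : ℝ → ℝ} {c : ℝ}
    (hd : ∀ᶠ t in 𝓝 (0:ℝ), HasDerivAt h (p t) t)
    (hp : HasDerivAt p c 0) (hmax : IsLocalMax h 0) : c ≤ 0 := by
  by_contra hc
  push_neg at hc
  have hp0 : p 0 = 0 := hmax.hasDerivAt_eq_zero hd.self_of_nhds
  have hslope : Tendsto (fun t => p t / t) (𝓝[≠] (0:ℝ)) (𝓝 c) := by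
    have := hasDerivAt_iff_tendsto_slope.mp hp
    simpa [slope_fun_def, hp0, sub_zero, div_eq_inv_mul] using this
  have hpos : ∀ᶠ t in 𝓝[>] (0:ℝ), 0 < p t := by
    have h1 : ∀ᶠ t in 𝓝[≠] (0:ℝ), 0 < p t / t := hslope.eventually (lt_mem_nhds hc)
    have h2 : ∀ᶠ t in 𝓝[>] (0:ℝ), 0 < p t / t :=
      h1.filter_mono (nhdsWithin_mono 0 (fun t ht => ne_of_gt ht))
    filter_upwards [h2, self_mem_nhdsWithin] with t ht ht'
    have : 0 < (p t / t) * t := mul_pos ht ht'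
    rwa [div_mul_cancel₀ _ (ne_of_gt ht')] at this
  have hIoi : ∀ᶠ t in 𝓝 (0:ℝ), t ∈ Ioi (0:ℝ) → 0 < p t :=
    eventually_nhdsWithin_iff.mp hpos
  have hall : ∀ᶠ t in 𝓝 (0:ℝ),
      (t ∈ Ioi (0:ℝ) → 0 < p t) ∧ HasDerivAt h (p t) t ∧ h t ≤ h 0 :=
    hIoi.and (hd.and hmax)
  obtain ⟨δ, hδpos, hδ⟩ := Metric.eventually_nhds_iff.mp hall
  have hmem : ∀ t ∈ Icc (0:ℝ) (δ/2), dist t 0 < δ := by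
    intro t ht
    rw [Real.dist_eq, sub_zero, abs_of_nonneg ht.1]
    linarith [ht.2]
  have hmono : StrictMonoOn h (Icc (0:ℝ) (δ/2)) := by
    apply strictMonoOn_of_deriv_pos (convex_Icc _ _)
    · intro t ht
      exact ((hδ (hmem t ht)).2.1).continuousAt.continuousWithinAt
    · intro t ht
      rw [interior_Icc] at ht
      have h' := hδ (hmem t ⟨ht.1.le, ht.2.le⟩)
      rw [h'.2.1.deriv]
      exact h'.1 ht.1
  have h1 : h 0 < h (δ/2) :=
    hmono ⟨le_refl _, by linarith⟩ ⟨by linarith, le_refl _⟩ (by linarith)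
  have h2 : h (δ/2) ≤ h 0 := (hδ (hmem _ ⟨by linarith, le_refl _⟩)).2.2
  linarith

section Line

variable {E : Type*} [NormedAddCommGroup E] [NormedSpace ℝ E]

lemma hasDerivAt_line (y0 v : E) (t : ℝ) :
    HasDerivAt (fun s : ℝ => y0 + s • v) v t := by
  simpa using ((hasDerivAt_id t).smul_const v).const_add y0

lemma eventually_hasDerivAt_line {g : E → ℝ} {U : Set E} (hU : IsOpen U) {y0 : E}
    (hy0 : y0 ∈ U) (hg : ContDiffOn ℝ 2 g U) (v : E) :
    ∀ᶠ t : ℝ in 𝓝 0, HasDerivAt (fun s : ℝ => g (y0 + s • v)) (fderiv ℝ g (y0 + t • v) v) t := by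
  have hcont : Continuous (fun t : ℝ => y0 + t • v) :=
    continuous_const.add (continuous_id.smul continuous_const)
  have hmem : ∀ᶠ t : ℝ in 𝓝 0, y0 + t • v ∈ U := by
    have : Tendsto (fun t : ℝ => y0 + t • v) (𝓝 0) (𝓝 y0) := by
      simpa using hcont.tendsto 0
    exact this.eventually (hU.eventually_mem hy0)
  filter_upwards [hmem] with t ht
  have hdiff : DifferentiableAt ℝ g (y0 + t • v) :=
    ((hg.contDiffAt (hU.mem_nhds ht)).differentiableAt (by norm_num))
  exact hdiff.hasFDerivAt.comp_hasDerivAt t (hasDerivAt_line y0 v t)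

lemma hasDerivAt_line_fderiv {g : E → ℝ} {U : Set E} (hU : IsOpen U) {y0 : E}
    (hy0 : y0 ∈ U) (hg : ContDiffOn ℝ 2 g U) (v : E) :
    HasDerivAt (fun t : ℝ => fderiv ℝ g (y0 + t • v) v)
      (iteratedFDeriv ℝ 2 g y0 ![v, v]) 0 := by
  have h2 : iteratedFDeriv ℝ 2 g y0 ![v, v] = fderiv ℝ (fderiv ℝ g) y0 v v := by
    rw [iteratedFDeriv_two_apply]; simp
  rw [h2]
  have hg' : ContDiffOn ℝ 1 (fderiv ℝ g) U := hg.fderiv_of_isOpen hU (by norm_num)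
  have hdiff : DifferentiableAt ℝ (fderiv ℝ g) y0 :=
    (hg'.contDiffAt (hU.mem_nhds hy0)).differentiableAt (by norm_num)
  have hF : HasFDerivAt (fderiv ℝ g) (fderiv ℝ (fderiv ℝ g) y0)
      ((fun t : ℝ => y0 + t • v) 0) := by
    rw [show (fun t : ℝ => y0 + t • v) 0 = y0 by simp]
    exact hdiff.hasFDerivAt
  have H : HasDerivAt (fun t : ℝ => fderiv ℝ g (y0 + t • v))
      (fderiv ℝ (fderiv ℝ g) y0 v) 0 :=
    hF.comp_hasDerivAt 0 (hasDerivAt_line y0 v 0)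
  have := (ContinuousLinearMap.apply ℝ ℝ v).hasFDerivAt.comp_hasDerivAt 0 H
  exact this

lemma iteratedFDeriv_two_nonpos_of_isLocalMax {g : E → ℝ} {U : Set E} (hU : IsOpen U)
    {y0 : E} (hy0 : y0 ∈ U) (hg : ContDiffOn ℝ 2 g U) (hmax : IsLocalMax g y0) (v : E) :
    iteratedFDeriv ℝ 2 g y0 ![v, v] ≤ 0 := by
  apply deriv2_nonpos_of_isLocalMax (eventually_hasDerivAt_line hU hy0 hg v)
    (hasDerivAt_line_fderiv hU hy0 hg v)
  have hc2 : Continuous (fun t : ℝ => y0 + t • v) :=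
    continuous_const.add (continuous_id.smul continuous_const)
  have hcont : Tendsto (fun t : ℝ => y0 + t • v) (𝓝 0) (𝓝 y0) := by
    simpa using hc2.tendsto 0
  have := hcont.eventually hmax
  refine Filter.Eventually.mono this ?_
  intro t ht
  simpa using ht

end Line

section Quad

variable {H : Type*} [NormedAddCommGroup H] [InnerProductSpace ℝ H] [CompleteSpace H]

lemma inner_gradient_eq (f : H → ℝ) (y w : H) : ⟪gradient f y, w⟫ = fderiv ℝ f y w :=
  InnerProductSpace.toDual_symm_apply

omit [CompleteSpace H] in
lemma vq_contDiff (x : H) (c : ℝ) : ContDiff ℝ 2 (fun y : H => c - ‖y - x‖^2) :=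
  contDiff_const.sub ((contDiff_norm_sq ℝ).comp (contDiff_id.sub contDiff_const))

omit [CompleteSpace H] in
lemma vq_hasFDerivAt (x : H) (c : ℝ) (y : H) :
    HasFDerivAt (fun y : H => c - ‖y - x‖^2) (-(2 • innerSL ℝ (y - x))) y := by
  have h1 : HasFDerivAt (fun y : H => y - x) (ContinuousLinearMap.id ℝ H) y := by
    simpa using (hasFDerivAt_id y).sub_const x
  have h2 := h1.norm_sq
  have h3 := (hasFDerivAt_const c y).sub h2
  exact h3.congr_fderiv (by ext w; simp)

omit [CompleteSpace H] in
lemma vq_fderiv_apply (x : H) (c : ℝ) (y w : H) :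
    fderiv ℝ (fun y : H => c - ‖y - x‖^2) y w = -(2 * ⟪y - x, w⟫) := by
  rw [(vq_hasFDerivAt x c y).fderiv]
  simp [two_smul, inner_sub_left]
  ring

omit [CompleteSpace H] in
lemma vq_iteratedFDeriv (x : H) (c : ℝ) (y v : H) :
    iteratedFDeriv ℝ 2 (fun y : H => c - ‖y - x‖^2) y ![v, v] = -(2 * ‖v‖^2) := by
  have hline := hasDerivAt_line_fderiv isOpen_univ (mem_univ y)
    ((vq_contDiff x c).contDiffOn) v
  have hfun : (fun t : ℝ => fderiv ℝ (fun y : H => c - ‖y - x‖^2) (y + t • v) v)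
      = fun t : ℝ => -(2 * ⟪y - x, v⟫) - t * (2 * ‖v‖^2) := by
    funext t
    rw [vq_fderiv_apply]
    have : y + t • v - x = (y - x) + t • v := add_sub_right_comm y (t • v) x
    rw [this, inner_add_left, real_inner_smul_left, real_inner_self_eq_norm_sq]
    ring
  have h2 : HasDerivAt (fun t : ℝ => fderiv ℝ (fun y : H => c - ‖y - x‖^2) (y + t • v) v)
      (-(2 * ‖v‖^2)) 0 := by
    rw [hfun]
    have := ((hasDerivAt_id' (0:ℝ)).mul_const (2 * ‖v‖^2)).const_sub
      (-(2 * ⟪y - x, v⟫))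
    simpa using this
  exact hline.unique h2

end Quad

lemma final_arith {ε s dd L W vy lam Rsq : ℝ} (hε : 0 < ε) (hs : 0 < s) (hdd : 0 ≤ dd)
    (hvpos : 0 < vy) (hvle : vy ≤ Rsq)
    (heq : -ε * L + s * (-(2 * W)) = lam * (s * vy))
    (hL : L ≤ s * (-(2 * dd))) (hW : 2 * W ≤ dd * ε) : dd * ε ≤ lam * Rsq := by
  have h1 : s * (dd * ε) ≤ s * (lam * vy) := by nlinarith
  have h2 : dd * ε ≤ lam * vy := le_of_mul_le_mul_left h1 hs
  have hlam : 0 ≤ lam := by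
    by_contra hneg
    push_neg at hneg
    nlinarith [mul_pos (neg_pos.2 hneg) hvpos, mul_nonneg hdd hε.le]
  have h3 : lam * vy ≤ lam * Rsq := mul_le_mul_of_nonneg_left hvle hlam
  linarith

lemma key_bound {d : ℕ} (F : EuclideanSpace ℝ (Fin d) → ℝ) (hF : ContDiff ℝ 1 F)
    (ε : ℝ) (hε : 0 < ε) (x : EuclideanSpace ℝ (Fin d)) (R : ℝ) (hR : 0 < R)
    (hdrift : 2 * R * sSup ((fun y => ‖gradient F y‖) '' Metric.ball x R) ≤ d * ε)
    (φ : EuclideanSpace ℝ (Fin d) → ℝ)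
    (U : Set (EuclideanSpace ℝ (Fin d))) (hUopen : IsOpen U)
    (hU : Metric.closedBall x R ⊆ U) (hφ2 : ContDiffOn ℝ 2 φ U)
    (hφpos : ∀ y ∈ Metric.ball x R, 0 < φ y)
    (hφbd : ∀ y ∈ Metric.sphere x R, φ y = 0)
    (lam : ℝ)
    (hφeq : ∀ y ∈ Metric.ball x R, Lop ε F φ y = lam * φ y)
    (R' : ℝ) (hRR' : R < R') : d * ε / R' ^ 2 ≤ lam := by
  have hR' : 0 < R' := hR.trans hRR'
  set v' : EuclideanSpace ℝ (Fin d) → ℝ := fun y => R'^2 - ‖y - x‖^2 with hv'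
  have hv'c2 : ContDiff ℝ 2 v' := vq_contDiff x (R'^2)
  have hv'pos : ∀ y ∈ closedBall x R, 0 < v' y := by
    intro y hy
    have h1 : ‖y - x‖ ≤ R := by rwa [mem_closedBall, dist_eq_norm] at hy
    have h2 : ‖y - x‖^2 ≤ R^2 := by nlinarith [norm_nonneg (y - x)]
    simp only [hv']
    nlinarith
  have hv'le : ∀ y, v' y ≤ R'^2 := by
    intro y; simp only [hv']; nlinarith [sq_nonneg ‖y - x‖]
  -- maximize φ / v' over the closed ball
  set ψ : EuclideanSpace ℝ (Fin d) → ℝ := fun y => φ y / v' y with hψ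
  have hψcont : ContinuousOn ψ (closedBall x R) :=
    ((hφ2.continuousOn.mono hU).div (hv'c2.continuous.continuousOn)
      (fun y hy => (hv'pos y hy).ne'))
  obtain ⟨y0, hy0K, hy0max⟩ := (isCompact_closedBall x R).exists_isMaxOn
    ⟨x, mem_closedBall_self hR.le⟩ hψcont
  set s := ψ y0 with hsdef
  have hxball : x ∈ ball x R := mem_ball_self hR
  have hxK : x ∈ closedBall x R := mem_closedBall_self hR.le
  have hspos : 0 < s := by
    have h1 : 0 < ψ x := div_pos (hφpos x hxball) (hv'pos x hxK)
    exact lt_of_lt_of_le h1 (hy0max hxK)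
  have hy0ball : y0 ∈ ball x R := by
    by_contra hnb
    have hd1 : dist y0 x ≤ R := mem_closedBall.mp hy0K
    have hd2 : ¬ dist y0 x < R := fun h => hnb (mem_ball.mpr h)
    have hsp : y0 ∈ sphere x R := by
      rw [mem_sphere]; linarith [not_lt.mp hd2]
    have hz : φ y0 = 0 := hφbd _ hsp
    rw [hsdef, hψ] at hspos
    simp only [hz, zero_div] at hspos
    exact lt_irrefl 0 hspos
  have hy0U : y0 ∈ U := hU hy0K
  have hφle : ∀ y ∈ closedBall x R, φ y ≤ s * v' y := by
    intro y hy
    have h1 : ψ y ≤ s := hy0max hy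
    rw [hψ] at h1
    exact (div_le_iff₀ (hv'pos y hy)).mp h1
  have hφy0 : φ y0 = s * v' y0 := by
    rw [hsdef, hψ]
    exact (div_mul_cancel₀ _ (hv'pos y0 hy0K).ne').symm
  -- the comparison function g
  set g : EuclideanSpace ℝ (Fin d) → ℝ := fun y => φ y - s * v' y with hgdef
  have hg2 : ContDiffOn ℝ 2 g U := hφ2.sub (contDiffOn_const.mul hv'c2.contDiffOn)
  have hmaxg : IsLocalMax g y0 := by
    have hball : ball x R ∈ 𝓝 y0 := isOpen_ball.mem_nhds hy0ball
    have : ∀ᶠ y in 𝓝 y0, g y ≤ g y0 := by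
      refine Filter.eventually_of_mem hball (fun y hy => ?_)
      have h1 := hφle y (ball_subset_closedBall hy)
      simp only [hgdef]
      linarith [hφy0]
    exact this
  -- first order condition
  have hdφ : DifferentiableAt ℝ φ y0 :=
    (hφ2.contDiffAt (hUopen.mem_nhds hy0U)).differentiableAt (by norm_num)
  have hdv' : DifferentiableAt ℝ v' y0 := (vq_hasFDerivAt x (R'^2) y0).differentiableAt
  have hfg0 : fderiv ℝ g y0 = 0 := hmaxg.fderiv_eq_zero
  have hfderivφ : fderiv ℝ φ y0 = s • fderiv ℝ v' y0 := by
    have h1 : fderiv ℝ g y0 = fderiv ℝ φ y0 - s • fderiv ℝ v' y0 := by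
      rw [hgdef]
      rw [fderiv_fun_sub hdφ (hdv'.const_mul s), fderiv_const_mul hdv' s]
    rw [h1] at hfg0
    exact sub_eq_zero.mp hfg0
  -- the inner product term
  have hinner : ⟪gradient F y0, gradient φ y0⟫ = s * (-(2 * ⟪y0 - x, gradient F y0⟫)) := by
    rw [real_inner_comm, inner_gradient_eq, hfderivφ, ContinuousLinearMap.smul_apply,
      smul_eq_mul]
    congr 1
    rw [hv']
    exact vq_fderiv_apply x (R'^2) y0 (gradient F y0)
  -- bound on the drift term
  have hM : ‖gradient F y0‖ ≤ sSup ((fun y => ‖gradient F y‖) '' Metric.ball x R) := by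
    have hgradcont : Continuous fun y : EuclideanSpace ℝ (Fin d) => ‖gradient F y‖ := by
      have h1 : Continuous (fderiv ℝ F) := hF.continuous_fderiv (by norm_num)
      exact ((toDual ℝ (EuclideanSpace ℝ (Fin d))).symm.continuous.comp h1).norm
    have hbdd : BddAbove ((fun y => ‖gradient F y‖) '' Metric.ball x R) :=
      (((isCompact_closedBall x R).bddAbove_image hgradcont.continuousOn).mono
        (image_mono ball_subset_closedBall))
    exact le_csSup hbdd (mem_image_of_mem _ hy0ball)
  have h2w : 2 * ⟪y0 - x, gradient F y0⟫ ≤ (d : ℝ) * ε := by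
    have h1 : ⟪y0 - x, gradient F y0⟫ ≤ ‖y0 - x‖ * ‖gradient F y0‖ :=
      real_inner_le_norm _ _
    have h2 : ‖y0 - x‖ ≤ R := by
      rw [← dist_eq_norm]; exact mem_closedBall.mp hy0K
    have h3 : ‖y0 - x‖ * ‖gradient F y0‖ ≤
        R * sSup ((fun y => ‖gradient F y‖) '' Metric.ball x R) :=
      mul_le_mul h2 hM (norm_nonneg _) hR.le
    linarith
  -- second order: laplacian comparison
  have hUdiff : UniqueDiffOn ℝ U := hUopen.uniqueDiffOn
  have hphisplit : φ = fun y => g y + s * v' y := by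
    funext y; simp only [hgdef]; ring
  have hlap_eq : ∀ i : Fin d,
      iteratedFDeriv ℝ 2 φ y0 ![EuclideanSpace.single i 1, EuclideanSpace.single i 1]
      = iteratedFDeriv ℝ 2 g y0 ![EuclideanSpace.single i 1, EuclideanSpace.single i 1]
        + s * iteratedFDeriv ℝ 2 v' y0
            ![EuclideanSpace.single i 1, EuclideanSpace.single i 1] := by
    intro i
    have hsv2 : ContDiffOn ℝ 2 (fun y => s * v' y) U := contDiffOn_const.mul hv'c2.contDiffOn
    have e1 : iteratedFDeriv ℝ 2 φ y0 = iteratedFDerivWithin ℝ 2 φ U y0 :=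
      (iteratedFDerivWithin_of_isOpen 2 hUopen hy0U).symm
    have e2 : iteratedFDeriv ℝ 2 g y0 = iteratedFDerivWithin ℝ 2 g U y0 :=
      (iteratedFDerivWithin_of_isOpen 2 hUopen hy0U).symm
    have e3 : iteratedFDeriv ℝ 2 v' y0 = iteratedFDerivWithin ℝ 2 v' U y0 :=
      (iteratedFDerivWithin_of_isOpen 2 hUopen hy0U).symm
    rw [e1, e2, e3]
    rw [hphisplit]
    rw [iteratedFDerivWithin_add_apply' (hg2 y0 hy0U) (hsv2 y0 hy0U) hUdiff hy0U]
    congr 1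
    have : (fun y => s * v' y) = s • v' := by funext y; simp [smul_eq_mul]
    rw [this, iteratedFDerivWithin_const_smul_apply (hv'c2.contDiffOn y0 hy0U) hUdiff hy0U]
    simp [smul_eq_mul]
  have hlapv' : laplacian v' y0 = -(2 * d) := by
    unfold laplacian
    have : ∀ i : Fin d, iteratedFDeriv ℝ 2 v' y0
        ![EuclideanSpace.single i 1, EuclideanSpace.single i 1] = -2 := by
      intro i
      rw [hv']
      rw [vq_iteratedFDeriv x (R'^2) y0 (EuclideanSpace.single i 1)]
      rw [EuclideanSpace.norm_single]
      norm_num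
    rw [Finset.sum_congr rfl (fun i _ => this i)]
    simp [Finset.card_univ]
    ring
  have hlapg : laplacian g y0 ≤ 0 := by
    unfold laplacian
    apply Finset.sum_nonpos
    intro i _
    exact iteratedFDeriv_two_nonpos_of_isLocalMax hUopen hy0U hg2 hmaxg _
  have hlapφ : laplacian φ y0 ≤ s * (-(2 * d)) := by
    have h1 : laplacian φ y0 = laplacian g y0 + s * laplacian v' y0 := by
      unfold laplacian
      rw [Finset.sum_congr rfl (fun i _ => hlap_eq i), Finset.sum_add_distrib,
        ← Finset.mul_sum]
    rw [h1, hlapv']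
    linarith
  -- assemble
  have heq := hφeq y0 hy0ball
  unfold Lop at heq
  rw [hinner, hφy0] at heq
  have hv'y0pos : 0 < v' y0 := hv'pos y0 hy0K
  have hv'y0le : v' y0 ≤ R'^2 := hv'le y0
  have hDnn : (0:ℝ) ≤ (d:ℝ) := Nat.cast_nonneg d
  rw [div_le_iff₀ (by positivity : (0:ℝ) < R'^2)]
  exact final_arith hε hspos hDnn hv'y0pos hv'y0le heq hlapφ h2w

/-- lower bound on the principal Dirichlet eigenvalue of `L_ε` on a
small ball (bound (2.21) from the proof of Lemma 2.3). -/
theorem stmt_6 {d : ℕ} (F : EuclideanSpace ℝ (Fin d) → ℝ) (hF : ContDiff ℝ 1 F)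
    (ε : ℝ) (hε : 0 < ε) (x : EuclideanSpace ℝ (Fin d)) (R : ℝ) (hR : 0 < R)
    (hdrift : 2 * R * sSup ((fun y => ‖gradient F y‖) '' Metric.ball x R) ≤ d * ε)
    (φ : EuclideanSpace ℝ (Fin d) → ℝ)
    (U : Set (EuclideanSpace ℝ (Fin d))) (hUopen : IsOpen U)
    (hU : Metric.closedBall x R ⊆ U) (hφ2 : ContDiffOn ℝ 2 φ U)
    (hφpos : ∀ y ∈ Metric.ball x R, 0 < φ y)
    (hφbd : ∀ y ∈ Metric.sphere x R, φ y = 0)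
    (lam : ℝ)
    (hφeq : ∀ y ∈ Metric.ball x R, Lop ε F φ y = lam * φ y) :
    d * ε / R ^ 2 ≤ lam ∧
      ∀ δ : ℝ, 1 / 8 < δ → δ < 1 → R = δ * ε → d / (δ ^ 2 * ε) ≤ lam := by
  have hkey : ∀ R'' : ℝ, R < R'' → (d:ℝ) * ε / R''^2 ≤ lam := fun R'' h =>
    key_bound F hF ε hε x R hR hdrift φ U hUopen hU hφ2 hφpos hφbd lam hφeq R'' h
  have h1 : (d:ℝ) * ε / R^2 ≤ lam := by
    have hten : Tendsto (fun r : ℝ => (d:ℝ) * ε / r^2) (𝓝[>] R) (𝓝 ((d:ℝ)*ε/R^2)) := by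
      apply ContinuousAt.continuousWithinAt
      exact ContinuousAt.div continuousAt_const ((continuous_pow 2).continuousAt)
        (pow_ne_zero 2 hR.ne')
    refine le_of_tendsto hten ?_
    filter_upwards [self_mem_nhdsWithin] with r hr
    exact hkey r hr
  refine ⟨h1, fun δ hδ1 hδ2 hRδ => ?_⟩
  have hδpos : 0 < δ := by linarith
  have heq2 : (d:ℝ) / (δ^2 * ε) = (d:ℝ) * ε / R^2 := by
    rw [hRδ]; field_simp
  rw [heq2]; exact h1
end

section
/- Let d ≥ 1 and let F : ℝ^d → ℝ be continuously differentiable with locally Lipschitz gradient. Suppose there are constants c > 0 and C₁ ∈ ℝ such that |∇F(x)| ≥ c for every x ∈ ℝ^d with F(x) > C₁. Then for every α ≥ C₁ such that the sublevel set {y : F(y) ≤ α} is nonempty, and every x ∈ ℝ^d with F(x) > α, one has F(x) − α ≥ c·dist(x, {y : F(y) ≤ α}). -/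
open Metric Set

private theorem stmt10_key {d : ℕ} (F : EuclideanSpace ℝ (Fin d) → ℝ) (hF : ContDiff ℝ 1 F)
    (c C₁ : ℝ) (hc : 0 < c)
    (hgrad : ∀ x, C₁ < F x → c ≤ ‖gradient F x‖)
    (α : ℝ) (hα : C₁ ≤ α)
    (x : EuclideanSpace ℝ (Fin d)) (hx : α < F x)
    (c' : ℝ) (hc'0 : 0 < c') (hc'c : c' < c)
    (t : ℝ) (ht0 : 0 ≤ t) (htr : t < Metric.infDist x {y | F y ≤ α}) :
    c' * t ≤ F x - α := by
  set S := {y | F y ≤ α} with hS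
  set A : Set ℝ := {s | s ≤ t ∧ ∃ y, dist y x ≤ s ∧ F y ≤ F x - c' * s} with hA
  have h0A : (0:ℝ) ∈ A := ⟨ht0, x, by simp, by simp⟩
  have hbdd : BddAbove A := ⟨t, fun s hs => hs.1⟩
  set T := sSup A with hT
  have hT0 : (0:ℝ) ≤ T := le_csSup hbdd h0A
  have hTt : T ≤ t := csSup_le ⟨0, h0A⟩ fun s hs => hs.1
  obtain ⟨z, hzball, hzmin⟩ := (isCompact_closedBall x T).exists_isMinOn
    ⟨x, mem_closedBall_self hT0⟩ hF.continuous.continuousOn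
  have hzF : F z ≤ F x - c' * T := by
    have h1 : ∀ s ∈ A, s ≤ (F x - F z) / c' := by
      intro s hs
      obtain ⟨hst, y, hy, hFy⟩ := hs
      have hyb : y ∈ closedBall x T := mem_closedBall.mpr (hy.trans (le_csSup hbdd ⟨hst, y, hy, hFy⟩))
      have := hzmin hyb
      rw [le_div_iff₀ hc'0]
      simp only [Set.mem_setOf_eq] at this
      nlinarith
    have h2 : T ≤ (F x - F z) / c' := csSup_le ⟨0, h0A⟩ h1
    rw [le_div_iff₀ hc'0] at h2
    nlinarith
  have hzS : α < F z := by
    by_contra h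
    push_neg at h
    have h1 : Metric.infDist x S ≤ dist x z := Metric.infDist_le_dist_of_mem h
    rw [dist_comm] at h1
    have h2 : dist z x ≤ T := mem_closedBall.mp hzball
    linarith
  have hCz : C₁ < F z := lt_of_le_of_lt hα hzS
  have hgz : c ≤ ‖gradient F z‖ := hgrad z hCz
  rcases eq_or_lt_of_le hTt with hTeq | hTlt
  · rw [hTeq] at hzF; linarith
  · exfalso
    set g := gradient F z with hg
    have hgn : (0:ℝ) < ‖g‖ := lt_of_lt_of_le hc hgz
    set w : EuclideanSpace ℝ (Fin d) := -(‖g‖⁻¹ • g) with hw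
    have hwn : ‖w‖ = 1 := by
      rw [hw, norm_neg, norm_smul, norm_inv, norm_norm]
      field_simp
    have hd1 : HasDerivAt (fun s : ℝ => z + s • w) w 0 := by
      simpa using ((hasDerivAt_id (0:ℝ)).smul_const w).const_add z
    have hd2 : HasFDerivAt F ((InnerProductSpace.toDual ℝ _) g) z :=
      (hF.differentiable one_ne_zero z).hasGradientAt
    have hψ : HasDerivAt (fun s : ℝ => F (z + s • w)) (-‖g‖) 0 := by
      have hcomp := (show HasFDerivAt F ((InnerProductSpace.toDual ℝ _) g) (z + (0:ℝ) • w) by simpa using hd2).comp_hasDerivAt 0 hd1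
      have hval : (InnerProductSpace.toDual ℝ _) g w = -‖g‖ := by
        rw [InnerProductSpace.toDual_apply_apply, hw, inner_neg_right, real_inner_smul_right,
          real_inner_self_eq_norm_mul_norm]
        field_simp
      rw [hval] at hcomp
      exact hcomp
    have hslope := hasDerivAt_iff_tendsto_slope.mp hψ
    have hslope' : Filter.Tendsto (slope (fun s : ℝ => F (z + s • w)) 0) (nhdsWithin 0 (Set.Ioi 0)) (nhds (-‖g‖)) :=
      hslope.mono_left (nhdsWithin_mono _ (fun s hs => ne_of_gt hs))
    have hev1 : ∀ᶠ s in nhdsWithin (0:ℝ) (Set.Ioi 0), slope (fun s : ℝ => F (z + s • w)) 0 s < -c' :=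
      hslope'.eventually_lt_const (by linarith)
    have hev2 : ∀ᶠ s in nhdsWithin (0:ℝ) (Set.Ioi 0), s < t - T :=
      eventually_nhdsWithin_of_eventually_nhds (eventually_lt_nhds (by linarith))
    have hev3 : ∀ᶠ s in nhdsWithin (0:ℝ) (Set.Ioi 0), (0:ℝ) < s :=
      eventually_mem_nhdsWithin
    obtain ⟨s, ⟨hs1, hs2⟩, hs3⟩ := ((hev1.and hev2).and hev3).exists
    have hs4 : F (z + s • w) < F z - c' * s := by
      rw [slope_def_field] at hs1
      have := (div_lt_iff₀ hs3).mp (by simpa using hs1)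
      linarith
    have hTA : T + s ∈ A := by
      refine ⟨by linarith, z + s • w, ?_, ?_⟩
      · have hdzw : dist (z + s • w) z = s := by
          rw [dist_eq_norm]
          simp [norm_smul, hwn, abs_of_pos hs3]
        calc dist (z + s • w) x ≤ dist (z + s • w) z + dist z x := dist_triangle _ _ _
          _ ≤ s + T := by
              have := mem_closedBall.mp hzball
              linarith [hdzw.le, this]
          _ = T + s := by ring
      · nlinarith
    have := le_csSup hbdd hTA
    linarith



/-- growth above level sets from the lower gradient bound. -/
theorem stmt_10 {d : ℕ} (hd : 1 ≤ d)
    (F : EuclideanSpace ℝ (Fin d) → ℝ) (hF : ContDiff ℝ 1 F)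
    (hFlip : LocallyLipschitz (gradient F))
    (c C₁ : ℝ) (hc : 0 < c)
    (hgrad : ∀ x, C₁ < F x → c ≤ ‖gradient F x‖)
    (α : ℝ) (hα : C₁ ≤ α) (hne : {y | F y ≤ α}.Nonempty)
    (x : EuclideanSpace ℝ (Fin d)) (hx : α < F x) :
    c * Metric.infDist x {y | F y ≤ α} ≤ F x - α := by
  set r := Metric.infDist x {y | F y ≤ α} with hr
  have hr0 : 0 ≤ r := Metric.infDist_nonneg
  by_contra hcon
  push_neg at hcon
  have hrpos : 0 < r := by nlinarith
  set q : ℝ := (F x - α) / (c * r) with hq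
  have hcr : 0 < c * r := mul_pos hc hrpos
  have hq0 : 0 < q := div_pos (by linarith) hcr
  have hq1 : q < 1 := (div_lt_one hcr).mpr hcon
  set θ : ℝ := Real.sqrt ((q + 1) / 2) with hθ
  have hθsq : θ ^ 2 = (q + 1) / 2 := Real.sq_sqrt (by linarith)
  have hθ0 : 0 < θ := Real.sqrt_pos.mpr (by linarith)
  have hθ1 : θ < 1 := by
    nlinarith [hθsq, hθ0]
  have h := stmt10_key F hF c C₁ hc hgrad α hα x hx (θ * c)
    (mul_pos hθ0 hc) (by nlinarith) (θ * r) (by positivity) (by nlinarith)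
  have : θ ^ 2 * (c * r) ≤ q * (c * r) := by
    have hqcr : q * (c * r) = F x - α := by
      rw [hq]; exact div_mul_cancel₀ _ (ne_of_gt hcr)
    nlinarith [h]
  have : θ ^ 2 ≤ q := le_of_mul_le_mul_right (by linarith) hcr
  nlinarith
end

section
/- Let d ≥ 1 and let F : ℝ^d → ℝ be continuously differentiable with locally Lipschitz gradient, and suppose there are constants c > 0 and C₁ ∈ ℝ such that |∇F(x)| ≥ c whenever F(x) > C₁. Fix α ≥ C₁ such that the sublevel set {y : F(y) ≤ α} is nonempty and bounded. Then there exists a constant C > 0, depending on d, c, α and F but not on ε, such that for every ε ∈ (0, 1]: ∫_{{x : F(x) > α}} e^{−F(x)/ε} dx ≤ C·e^{−α/ε}. -/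
open Metric Set Filter Topology MeasureTheory




theorem ekeland_weak {X : Type*} [MetricSpace X] [CompleteSpace X]
    (G : X → ℝ) (hG : Continuous G) (B : ℝ) (hB : ∀ x, B ≤ G x)
    (x₀ : X) (δ : ℝ) (hδ : 0 < δ) :
    ∃ y, dist y x₀ ≤ (G x₀ - B) / δ ∧ G y ≤ G x₀ ∧
      ∀ z, G y - δ * dist z y ≤ G z := by
  classical
  -- the auxiliary relation
  set rel : X → X → Prop := fun z y => G z + δ * dist z y ≤ G y with hrel
  have rel_refl : ∀ y, rel y y := fun y => by simp [hrel]
  have rel_trans : ∀ {a b c'}, rel a b → rel b c' → rel a c' := by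
    intro a b c' h1 h2
    have := dist_triangle a b c'
    simp only [hrel] at *
    nlinarith
  -- choice of the next point
  have hex : ∀ (y : X) (n : ℕ), ∃ z, rel z y ∧
      G z ≤ sInf (G '' {w | rel w y}) + (1/2)^n := by
    intro y n
    have hne : (G '' {w | rel w y}).Nonempty := ⟨G y, y, rel_refl y, rfl⟩
    have hlt : sInf (G '' {w | rel w y}) < sInf (G '' {w | rel w y}) + (1/2)^n := by
      have : (0:ℝ) < (1/2)^n := by positivity
      linarith
    obtain ⟨b, ⟨z, hz, rfl⟩, hb⟩ := exists_lt_of_csInf_lt hne hlt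
    exact ⟨z, hz, hb.le⟩
  -- the sequence
  let seq : ℕ → X := fun n => Nat.rec x₀ (fun n y => (hex y n).choose) n
  have hseq0 : seq 0 = x₀ := rfl
  have hstep : ∀ n, rel (seq (n+1)) (seq n) ∧
      G (seq (n+1)) ≤ sInf (G '' {w | rel w (seq n)}) + (1/2)^n :=
    fun n => (hex (seq n) n).choose_spec
  have hchain : ∀ n m, n ≤ m → rel (seq m) (seq n) := by
    intro n m hnm
    induction m with
    | zero => simp_all [Nat.le_zero.mp hnm, rel_refl]
    | succ k ih =>
      rcases Nat.lt_or_ge n (k+1) with h | h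
      · exact rel_trans (hstep k).1 (ih (Nat.lt_succ_iff.mp h))
      · have : n = k + 1 := le_antisymm hnm h
        subst this; exact rel_refl _
  have hGanti : Antitone fun n => G (seq n) := by
    apply antitone_nat_of_succ_le
    intro n
    have := (hstep n).1
    have hd0 : 0 ≤ dist (seq (n+1)) (seq n) := dist_nonneg
    simp only [hrel] at this
    nlinarith
  have hbdd : BddBelow (range fun n => G (seq n)) :=
    ⟨B, by rintro _ ⟨n, rfl⟩; exact hB _⟩
  set L : ℝ := ⨅ n, G (seq n) with hL
  have hGL : Tendsto (fun n => G (seq n)) atTop (𝓝 L) :=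
    tendsto_atTop_ciInf hGanti hbdd
  have hLle : ∀ n, L ≤ G (seq n) := fun n => ciInf_le hbdd n
  -- Cauchy
  have hdist : ∀ n m, n ≤ m → dist (seq m) (seq n) ≤ (G (seq n) - G (seq m)) / δ := by
    intro n m hnm
    have := hchain n m hnm
    simp only [hrel] at this
    rw [le_div_iff₀ hδ]
    nlinarith
  have hcauchy : CauchySeq seq := by
    apply cauchySeq_of_le_tendsto_0 (fun N => 2 * (G (seq N) - L) / δ)
    · intro n m N hn hm
      have h1 := hdist N n hn
      have h2 := hdist N m hm
      have := dist_triangle_right (seq n) (seq m) (seq N)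
      have hLn := hLle n
      have hLm := hLle m
      calc dist (seq n) (seq m) ≤ dist (seq n) (seq N) + dist (seq m) (seq N) := this
        _ ≤ (G (seq N) - G (seq n)) / δ + (G (seq N) - G (seq m)) / δ := by
            gcongr
        _ ≤ 2 * (G (seq N) - L) / δ := by
            rw [← add_div, div_le_div_iff₀ hδ hδ]
            nlinarith
    · have : Tendsto (fun N => 2 * (G (seq N) - L) / δ) atTop (𝓝 (2 * (L - L) / δ)) := by
        apply Tendsto.div_const
        exact (tendsto_const_nhds.mul (hGL.sub tendsto_const_nhds))
      simpa using this
  obtain ⟨y, hy⟩ := cauchySeq_tendsto_of_complete hcauchy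
  have hGy : G y = L := tendsto_nhds_unique ((hG.tendsto y).comp hy) hGL
  have hrely : ∀ n, rel y (seq n) := by
    intro n
    have hle : ∀ᶠ m in atTop, G (seq m) + δ * dist (seq m) (seq n) ≤ G (seq n) := by
      filter_upwards [eventually_ge_atTop n] with m hm using hchain n m hm
    have htend : Tendsto (fun m => G (seq m) + δ * dist (seq m) (seq n)) atTop
        (𝓝 (G y + δ * dist y (seq n))) := by
      exact (((hG.tendsto y).comp hy)).add
        (tendsto_const_nhds.mul ((Continuous.dist continuous_id continuous_const).continuousAt.tendsto.comp hy))
    exact le_of_tendsto htend hle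
  refine ⟨y, ?_, ?_, ?_⟩
  · have := hrely 0
    simp only [hrel, hseq0] at this
    have hBy := hB y
    rw [le_div_iff₀ hδ]
    nlinarith
  · have := hrely 0
    simp only [hrel, hseq0] at this
    have hd0 : 0 ≤ dist y x₀ := dist_nonneg
    nlinarith
  · intro z
    by_contra hcon
    push_neg at hcon
    have hzy : rel z y := by simp only [hrel]; nlinarith [dist_nonneg (x := z) (y := y)]
    have hzn : ∀ n, rel z (seq n) := fun n => rel_trans hzy (hrely n)
    have hinf : ∀ n, sInf (G '' {w | rel w (seq n)}) ≤ G z := fun n =>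
      csInf_le ⟨B, by rintro _ ⟨w, _, rfl⟩; exact hB w⟩ ⟨z, hzn n, rfl⟩
    have hGn1 : ∀ n, G (seq (n+1)) ≤ G z + (1/2)^n := fun n =>
      le_trans (hstep n).2 (by linarith [hinf n])
    have : L ≤ G z := by
      have htend : Tendsto (fun n : ℕ => G z + (1/2:ℝ)^n) atTop (𝓝 (G z + 0)) :=
        tendsto_const_nhds.add (tendsto_pow_atTop_nhds_zero_of_lt_one (by norm_num) (by norm_num))
      have h2 : Tendsto (fun n => G (seq (n+1))) atTop (𝓝 L) := hGL.comp (tendsto_add_atTop_nat 1)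
      have := le_of_tendsto_of_tendsto' h2 htend hGn1
      simpa using this
    rw [hGy] at hcon
    nlinarith [dist_nonneg (x := z) (y := y)]

theorem key_dist {d : ℕ} (F : EuclideanSpace ℝ (Fin d) → ℝ) (hF : ContDiff ℝ 1 F)
    (c C₁ : ℝ) (hc : 0 < c)
    (hgrad : ∀ x, C₁ < F x → c ≤ ‖gradient F x‖)
    (α : ℝ) (hα : C₁ ≤ α) :
    ∀ x, α < F x → α + c * infDist x {y | F y ≤ α} ≤ F x := by
  intro x₀ hx₀
  by_contra hcon
  push_neg at hcon
  set S := {y | F y ≤ α} with hS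
  set G : EuclideanSpace ℝ (Fin d) → ℝ := fun x => max (F x) α with hG
  have hGc : Continuous G := (hF.continuous).max continuous_const
  have hGB : ∀ x, α ≤ G x := fun x => le_max_right _ _
  set ε₀ := F x₀ - α with hε₀
  have hε₀pos : 0 < ε₀ := by simp [hε₀]; linarith
  have hinfpos : ε₀ / c < infDist x₀ S := by
    rw [div_lt_iff₀ hc]  -- ε₀ < c * infDist? hcon : F x₀ < α + c * infDist
    nlinarith [hcon]
  set lam := (ε₀ / c + infDist x₀ S) / 2 with hlam
  have hlam1 : ε₀ / c < lam := by simp [hlam]; linarith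
  have hlam2 : lam < infDist x₀ S := by simp [hlam]; linarith
  have hlampos : 0 < lam := lt_of_le_of_lt (by positivity) hlam1
  set δ := ε₀ / lam with hδdef
  have hδpos : 0 < δ := div_pos hε₀pos hlampos
  have hδc : δ < c := by
    rw [hδdef, div_lt_iff₀ hlampos]
    have : ε₀ / c < lam := hlam1
    rw [div_lt_iff₀ hc] at this
    linarith [mul_comm c lam]
  obtain ⟨y, hy1, hy2, hy3⟩ := ekeland_weak G hGc α hGB x₀ δ hδpos
  have hGx₀ : G x₀ = F x₀ := max_eq_left hx₀.le
  have hy1' : dist y x₀ ≤ lam := by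
    rw [hGx₀] at hy1
    calc dist y x₀ ≤ (F x₀ - α) / δ := hy1
      _ = lam := by rw [hδdef]; field_simp; exact hε₀.symm
  have hinfy : 0 < infDist y S := by
    have h := infDist_le_infDist_add_dist (x := x₀) (y := y) (s := S)
    rw [dist_comm] at hy1'
    linarith
  have hyS : y ∉ S := fun h => by
    rw [infDist_zero_of_mem h] at hinfy; exact lt_irrefl 0 hinfy
  have hFy : α < F y := lt_of_not_ge hyS
  have hcg : c ≤ ‖gradient F y‖ := hgrad y (lt_of_le_of_lt hα hFy)
  set g := gradient F y with hg
  have hgpos : 0 < ‖g‖ := lt_of_lt_of_le hc hcg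
  -- derivative of t ↦ F (y + t • (-g)) at 0
  have hdiff : DifferentiableAt ℝ F y := (hF.differentiable one_ne_zero).differentiableAt
  have hgrad_at : HasGradientAt F g y := hdiff.hasGradientAt
  set v := -g with hv
  have hγ : HasDerivAt (fun t : ℝ => y + t • v) v 0 := by
    have h1 : HasDerivAt (fun t : ℝ => t • v) ((1:ℝ) • v) 0 := (hasDerivAt_id (0:ℝ)).smul_const v
    simpa using h1.const_add y
  set φ : ℝ → ℝ := fun t => F (y + t • v) with hφdef
  have hφ : HasDerivAt φ (-(‖g‖^2)) 0 := by
    have hP : HasFDerivAt F ((InnerProductSpace.toDual ℝ (EuclideanSpace ℝ (Fin d))) g)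
        (y + (0:ℝ) • v) := by simpa using hgrad_at.hasFDerivAt
    have h := hP.comp_hasDerivAt 0 hγ
    have heq : (InnerProductSpace.toDual ℝ (EuclideanSpace ℝ (Fin d)) g) v = -(‖g‖^2) := by
      rw [InnerProductSpace.toDual_apply_apply, hv, inner_neg_right, real_inner_self_eq_norm_sq]
    rw [heq] at h
    exact h
  -- eventual slope bound
  have hev : ∀ᶠ t in 𝓝[>] (0:ℝ), -(δ * ‖g‖) ≤ (φ t - φ 0) / t := by
    have hopen : ∀ᶠ t in 𝓝 (0:ℝ), α < F (y + t • v) := by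
      have hcont : Continuous fun t : ℝ => F (y + t • v) :=
        hF.continuous.comp (continuous_const.add (continuous_id.smul continuous_const))
      have : {t : ℝ | α < F (y + t • v)} ∈ 𝓝 (0:ℝ) := by
        apply (isOpen_lt continuous_const hcont).mem_nhds
        simpa using hFy
      exact this
    filter_upwards [nhdsWithin_le_nhds hopen, self_mem_nhdsWithin] with t ht htpos
    have htpos' : (0:ℝ) < t := htpos
    have h3 := hy3 (y + t • v)
    have hdd : dist (y + t • v) y = t * ‖g‖ := by
      rw [dist_eq_norm]
      simp [hv, norm_smul, abs_of_pos htpos']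
    have hGz : G (y + t • v) = φ t := max_eq_left ht.le
    have hGy2 : G y = φ 0 := by
      have : φ 0 = F y := by simp [hφdef]
      rw [this]; exact max_eq_left hFy.le
    rw [hGz, hGy2, hdd] at h3
    rw [le_div_iff₀ htpos']
    nlinarith
  -- pass to the limit
  have hslope : Tendsto (fun t => (φ t - φ 0) / t) (𝓝[>] (0:ℝ)) (𝓝 (-(‖g‖^2))) := by
    have := hφ.hasDerivWithinAt (s := Ioi (0:ℝ))
    have h2 := hasDerivWithinAt_iff_tendsto_slope.mp this
    have h3 : Tendsto (slope φ 0) (𝓝[>] (0:ℝ)) (𝓝 (-(‖g‖^2))) := by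
      apply h2.mono_left
      apply nhdsWithin_mono
      intro t ht
      exact ⟨ht, by simpa using ne_of_gt ht⟩
    refine h3.congr' ?_
    filter_upwards [self_mem_nhdsWithin] with t ht
    rw [slope_def_field]
    field_simp; rw [sub_zero]
  have hfin : -(δ * ‖g‖) ≤ -(‖g‖^2) := ge_of_tendsto hslope hev
  have : ‖g‖ ≤ δ := by nlinarith
  linarith

/-- exponentially tight level sets: the Gibbs weight above level `α`
is at most `C·e^{−α/ε}` uniformly in `ε ∈ (0,1]`. -/
theorem stmt_11 {d : ℕ} (hd : 1 ≤ d)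
    (F : EuclideanSpace ℝ (Fin d) → ℝ) (hF : ContDiff ℝ 1 F)
    (hFlip : LocallyLipschitz (gradient F))
    (c C₁ : ℝ) (hc : 0 < c)
    (hgrad : ∀ x, C₁ < F x → c ≤ ‖gradient F x‖)
    (α : ℝ) (hα : C₁ ≤ α) (hne : {y | F y ≤ α}.Nonempty)
    (hbdd : Bornology.IsBounded {y | F y ≤ α}) :
    ∃ C > 0, ∀ ε : ℝ, 0 < ε → ε ≤ 1 →
      ∫ x in {x | α < F x}, Real.exp (-F x / ε) ≤ C * Real.exp (-α / ε) := by
  set S := {y | F y ≤ α} with hSdef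
  obtain ⟨R, hR⟩ := hbdd.subset_closedBall 0
  set g : EuclideanSpace ℝ (Fin d) → ℝ := fun x => Real.exp (-c * infDist x S) with hgdef
  have hgcont : Continuous g :=
    Real.continuous_exp.comp (continuous_const.mul (continuous_infDist_pt S))
  set r : ℝ := (d : ℝ) + 1 with hrdef
  have hrpos : (0:ℝ) < r := by positivity
  set k : ℝ := c / r with hkdef
  have hkpos : 0 < k := div_pos hc hrpos
  -- pointwise domination
  have hdom : ∀ x : EuclideanSpace ℝ (Fin d),
      g x ≤ (Real.exp (c * R) * (Real.exp k / k) ^ r) * (1 + ‖x‖) ^ (-r) := by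
    intro x
    have hxnorm : ‖x‖ - R ≤ infDist x S := by
      have h1 : ∀ y ∈ S, ‖x‖ - R ≤ dist x y := by
        intro y hy
        have hy' : ‖y‖ ≤ R := by simpa [dist_eq_norm] using hR hy
        have h2 : ‖x‖ - ‖y‖ ≤ ‖x - y‖ := norm_sub_norm_le x y
        rw [dist_eq_norm]; linarith
      by_contra hcon
      push_neg at hcon
      obtain ⟨y, hy, hlt⟩ := (infDist_lt_iff hne).mp hcon
      exact absurd hlt (not_lt.mpr (h1 y hy))
    have h1 : g x ≤ Real.exp (c * R) * Real.exp (-(c * ‖x‖)) := by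
      rw [hgdef, ← Real.exp_add]
      apply Real.exp_le_exp.mpr
      nlinarith
    have h2 : Real.exp (-(c * ‖x‖)) ≤ (Real.exp k / k) ^ r * (1 + ‖x‖) ^ (-r) := by
      set t := ‖x‖ with ht
      have htnn : 0 ≤ t := norm_nonneg x
      have hbase : (1 + t) ≤ Real.exp k / k * Real.exp (k * t) := by
        have h3 : k * (1 + t) ≤ Real.exp (k * (1 + t)) :=
          le_trans (by linarith) (Real.add_one_le_exp _)
        have h4 : Real.exp (k * (1 + t)) = Real.exp k * Real.exp (k * t) := by
          rw [← Real.exp_add]; ring_nf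
        rw [div_mul_eq_mul_div, le_div_iff₀ hkpos]
        nlinarith
      have hpow : (1 + t) ^ r ≤ (Real.exp k / k) ^ r * Real.exp (c * t) := by
        have h5 : (0:ℝ) ≤ 1 + t := by linarith
        have h6 : (1+t) ^ r ≤ (Real.exp k / k * Real.exp (k * t)) ^ r :=
          Real.rpow_le_rpow h5 hbase hrpos.le
        rw [Real.mul_rpow (by positivity) (Real.exp_nonneg _)] at h6
        rw [← Real.exp_mul] at h6
        have : k * t * r = c * t := by
          rw [hkdef]
          field_simp
        rwa [this] at h6
      have hpos1 : (0:ℝ) < (1+t) ^ r := Real.rpow_pos_of_pos (by linarith) r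
      rw [Real.rpow_neg (by positivity : (0:ℝ) ≤ 1+t), ← div_eq_mul_inv, le_div_iff₀ hpos1,
        Real.exp_neg, inv_mul_eq_div, div_le_iff₀ (Real.exp_pos _)]
      linarith [hpow]
    calc g x ≤ Real.exp (c * R) * Real.exp (-(c * ‖x‖)) := h1
      _ ≤ Real.exp (c * R) * ((Real.exp k / k) ^ r * (1 + ‖x‖) ^ (-r)) := by
          have := Real.exp_pos (c * R); nlinarith [h2, Real.exp_pos (c*R)]
      _ = (Real.exp (c * R) * (Real.exp k / k) ^ r) * (1 + ‖x‖) ^ (-r) := by ring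
  -- integrability of g
  have hfr : (Module.finrank ℝ (EuclideanSpace ℝ (Fin d)) : ℝ) < r := by
    rw [finrank_euclideanSpace_fin, hrdef]; exact lt_add_one _
  have hintbnd : Integrable (fun x : EuclideanSpace ℝ (Fin d) =>
      (Real.exp (c * R) * (Real.exp k / k) ^ r) * (1 + ‖x‖) ^ (-r)) :=
    (integrable_one_add_norm hfr).const_mul _
  have hgint : Integrable g := by
    apply hintbnd.mono' hgcont.aestronglyMeasurable
    filter_upwards with x
    rw [Real.norm_eq_abs, abs_of_pos (Real.exp_pos _)]
    exact hdom x
  set K₀ : ℝ := ∫ x, g x with hK₀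
  have hK₀nn : 0 ≤ K₀ := integral_nonneg fun x => (Real.exp_pos _).le
  refine ⟨K₀ + 1, by linarith, ?_⟩
  intro ε hε hε1
  set A := {x : EuclideanSpace ℝ (Fin d) | α < F x} with hA
  have hAmeas : MeasurableSet A := (isOpen_lt continuous_const hF.continuous).measurableSet
  have hpt : ∀ x ∈ A, Real.exp (-F x / ε) ≤ Real.exp (-α / ε) * g x := by
    intro x hx
    have hkey := key_dist F hF c C₁ hc hgrad α hα x hx
    have hq : 0 ≤ infDist x S := infDist_nonneg
    rw [hgdef, ← Real.exp_add]
    apply Real.exp_le_exp.mpr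
    rw [← hSdef] at hkey
    have h8 : c * infDist x S ≤ (F x - α) / ε := by
      rw [le_div_iff₀ hε]
      have h10 : c * infDist x S * ε ≤ c * infDist x S :=
        mul_le_of_le_one_right (mul_nonneg hc.le hq) hε1
      linarith
    have h9 : -F x / ε = -α / ε - (F x - α) / ε := by field_simp; ring
    rw [h9]; linarith
  have hint2 : IntegrableOn (fun x => Real.exp (-α / ε) * g x) A :=
    (hgint.const_mul _).integrableOn
  have hint1 : IntegrableOn (fun x => Real.exp (-F x / ε)) A := by
    apply hint2.mono' (Continuous.aestronglyMeasurable ?_).restrict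
    · rw [ae_restrict_iff' hAmeas]
      filter_upwards with x hx
      rw [Real.norm_eq_abs, abs_of_pos (Real.exp_pos _)]
      exact hpt x hx
    · exact Real.continuous_exp.comp ((hF.continuous.neg).div_const ε)
  calc ∫ x in A, Real.exp (-F x / ε)
      ≤ ∫ x in A, Real.exp (-α / ε) * g x := setIntegral_mono_on hint1 hint2 hAmeas hpt
    _ = Real.exp (-α / ε) * ∫ x in A, g x := by rw [integral_const_mul]
    _ ≤ Real.exp (-α / ε) * K₀ := by
        have h7 : ∫ x in A, g x ≤ K₀ :=
          setIntegral_le_integral hgint (Filter.Eventually.of_forall fun x => (Real.exp_pos _).le)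
        nlinarith [Real.exp_pos (-α / ε)]
    _ ≤ (K₀ + 1) * Real.exp (-α / ε) := by nlinarith [Real.exp_pos (-α / ε)]
end
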